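/- Let s ≥ 1, n ≥ 1, let θ ∈ 𝕋^s have pairwise distinct entries and let g ∈ ℂ^s. Then for every 0 ≤ k ≤ s−1, the Laurent polynomial L = û·û* + ũ·ũ* satisfies L(conj(θ_k)) = 2·|g_k|²·|t_k(conj(θ_k))|². Consequently, knowledge of θ and of c·L for an unknown real constant c > 0 determines the magnitudes |g_k| up to a common positive real scalar. -/

import Mathlib

open Polynomial Finset Complex

/-- `t_l(z) = ∏_{i ≠ l} (z·θ_i − 1)`. -/
noncomputable def tPoly (s : ℕ) (θ : Fin s → ℂ) (l : Fin s) : Polynomial ℂ :=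
  ∏ i ∈ Finset.univ.erase l, (Polynomial.C (θ i) * Polynomial.X - 1)

/-- `û(z) = Σ_l g_l · θ_l^n · t_l(z)`. -/
noncomputable def uHat (s n : ℕ) (θ g : Fin s → ℂ) : Polynomial ℂ :=
  ∑ l : Fin s, Polynomial.C (g l * θ l ^ n) * tPoly s θ l

/-- `ũ(z) = −Σ_l g_l · t_l(z)`. -/
noncomputable def uTilde (s : ℕ) (θ g : Fin s → ℂ) : Polynomial ℂ :=
  -∑ l : Fin s, Polynomial.C (g l) * tPoly s θ l

/-- cf. Proposition `prop:unique_g_abs_8s`: for each `k`, the Laurent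
polynomial `L = û·û* + ũ·ũ*` (here evaluated on `𝕋`, where
`L(w) = û(w)conj(û(w)) + ũ(w)conj(ũ(w))`) satisfies
`L(conj θ_k) = 2·|g_k|²·|t_k(conj θ_k)|²`. -/
theorem L_at_conj_theta (s n : ℕ) (hs : 1 ≤ s) (hn : 1 ≤ n)
    (θ : Fin s → ℂ) (hθT : ∀ l, ‖θ l‖ = 1) (hθinj : Function.Injective θ)
    (g : Fin s → ℂ) :
    ∀ k : Fin s,
      (uHat s n θ g).eval ((starRingEnd ℂ) (θ k)) *
          (starRingEnd ℂ) ((uHat s n θ g).eval ((starRingEnd ℂ) (θ k)))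
        + (uTilde s θ g).eval ((starRingEnd ℂ) (θ k)) *
          (starRingEnd ℂ) ((uTilde s θ g).eval ((starRingEnd ℂ) (θ k))) =
      ((2 * Complex.normSq (g k) *
          Complex.normSq ((tPoly s θ k).eval ((starRingEnd ℂ) (θ k))) : ℝ) : ℂ) := by
  intro k
  set w : ℂ := (starRingEnd ℂ) (θ k) with hw
  have hmul : θ k * w - 1 = 0 := by
    rw [hw, Complex.mul_conj]
    norm_cast
    rw [Complex.normSq_eq_norm_sq, hθT k]; norm_num
  have ht0 : ∀ l : Fin s, l ≠ k → (tPoly s θ l).eval w = 0 := by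
    intro l hl
    rw [tPoly, Polynomial.eval_prod]
    apply Finset.prod_eq_zero (i := k)
    · exact Finset.mem_erase.mpr ⟨fun h => hl h.symm, Finset.mem_univ k⟩
    · simp [hmul]
  have hsum : ∀ c : Fin s → ℂ,
      (∑ l : Fin s, Polynomial.C (c l) * tPoly s θ l).eval w
        = c k * (tPoly s θ k).eval w := by
    intro c
    rw [Polynomial.eval_finset_sum]
    rw [Finset.sum_eq_single k]
    · simp
    · intro l _ hl; simp [ht0 l hl]
    · simp
  have hu : (uHat s n θ g).eval w = g k * θ k ^ n * (tPoly s θ k).eval w := hsum _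
  have hv : (uTilde s θ g).eval w = -(g k * (tPoly s θ k).eval w) := by
    rw [uTilde, Polynomial.eval_neg, hsum]
  have hθn : θ k ^ n * (starRingEnd ℂ) (θ k ^ n) = 1 := by
    rw [Complex.mul_conj]
    norm_cast
    rw [Complex.normSq_eq_norm_sq, norm_pow, hθT k]; norm_num
  rw [hu, hv]
  have e1 : ∀ a : ℂ, a * (starRingEnd ℂ) a = (Complex.normSq a : ℂ) :=
    fun a => Complex.mul_conj a
  push_cast
  rw [map_neg, map_mul, map_mul, map_mul]
  linear_combination (g k * (starRingEnd ℂ) (g k) *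
      ((tPoly s θ k).eval w * (starRingEnd ℂ) ((tPoly s θ k).eval w))) * hθn
    + 2 * ((tPoly s θ k).eval w * (starRingEnd ℂ) ((tPoly s θ k).eval w)) * e1 (g k)
    + 2 * ((Complex.normSq (g k) : ℂ)) * e1 ((tPoly s θ k).eval w)
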